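/- Let α and β be algebraic units in ℂ such that [ℚ(α):ℚ] is coprime to [ℚ(β):ℚ] and p := [ℚ(αβ):ℚ] is prime. Then α^p = ±1 or β^p = ±1. -/

import Mathlib

open Polynomial IntermediateField

/-- An algebraic unit: root of a monic integer polynomial with constant term ±1. -/
def IsAlgebraicUnit (α : ℂ) : Prop :=
  ∃ p : Polynomial ℤ, p.Monic ∧ (p.coeff 0 = 1 ∨ p.coeff 0 = -1) ∧ Polynomial.aeval α p = 0

/-- The degree of α over ℚ, i.e. [ℚ(α):ℚ]. -/
noncomputable def degQ (α : ℂ) : ℕ := (minpoly ℚ α).natDegree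

set_option maxHeartbeats 1000000

lemma IsAlgebraicUnit.ne_zero {x : ℂ} (h : IsAlgebraicUnit x) : x ≠ 0 := by
  rintro rfl
  obtain ⟨f, hm, h0, he⟩ := h
  rw [aeval_def, eval₂_at_zero] at he
  rcases h0 with h0 | h0 <;> rw [h0] at he <;> simp at he

lemma IsAlgebraicUnit.isIntegral {x : ℂ} (h : IsAlgebraicUnit x) : IsIntegral ℤ x := by
  obtain ⟨f, hm, h0, he⟩ := h; exact ⟨f, hm, he⟩

lemma IsAlgebraicUnit.inv_isIntegral {x : ℂ} (h : IsAlgebraicUnit x) : IsIntegral ℤ x⁻¹ := by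
  obtain ⟨f, hm, h0, he⟩ := h
  have hx : x ≠ 0 := IsAlgebraicUnit.ne_zero ⟨f, hm, h0, he⟩
  letI := invertibleOfNonzero hx
  have hrev : Polynomial.aeval x⁻¹ (reverse f) = 0 := by
    have h2 := (eval₂_reverse_eq_zero_iff (algebraMap ℤ ℂ) x f).mpr (by rwa [aeval_def] at he)
    rw [invOf_eq_inv] at h2
    rwa [aeval_def]
  have hlead : (reverse f).leadingCoeff = f.coeff 0 := by
    rw [reverse_leadingCoeff, trailingCoeff, natTrailingDegree_eq_zero.mpr]
    right
    rcases h0 with h0 | h0 <;> simp [h0]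
  rcases h0 with h0 | h0
  · exact ⟨reverse f, by rw [Monic, hlead, h0], by rwa [aeval_def] at hrev⟩
  · exact ⟨-reverse f, by rw [Monic, leadingCoeff_neg, hlead, h0, neg_neg],
      by rw [← aeval_def, map_neg, hrev, neg_zero]⟩

variable {x : ℂ}

lemma minpolyZ_coeff_zero_isUnit (hx : x ≠ 0) (h1 : IsIntegral ℤ x) (h2 : IsIntegral ℤ x⁻¹) :
    IsUnit ((minpoly ℤ x).coeff 0) := by
  letI := invertibleOfNonzero (inv_ne_zero hx)
  have hrev : Polynomial.aeval x ((minpoly ℤ x⁻¹).reverse) = 0 := by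
    have h3 := (eval₂_reverse_eq_zero_iff (algebraMap ℤ ℂ) x⁻¹ (minpoly ℤ x⁻¹)).mpr
      (by rw [← aeval_def]; exact minpoly.aeval ℤ x⁻¹)
    rw [invOf_eq_inv, inv_inv] at h3
    rwa [aeval_def]
  have hdvd : minpoly ℤ x ∣ (minpoly ℤ x⁻¹).reverse := minpoly.isIntegrallyClosed_dvd h1 hrev
  obtain ⟨c, hc⟩ := hdvd
  have h0 : (minpoly ℤ x⁻¹).reverse.coeff 0 = 1 := by
    rw [coeff_zero_reverse]; exact minpoly.monic h2
  rw [hc, mul_coeff_zero] at h0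
  exact IsUnit.of_mul_eq_one _ h0

lemma minpolyQ_coeff_zero (hx : x ≠ 0) (h1 : IsIntegral ℤ x) (h2 : IsIntegral ℤ x⁻¹) :
    (minpoly ℚ x).coeff 0 = 1 ∨ (minpoly ℚ x).coeff 0 = -1 := by
  have heq : minpoly ℚ x = (minpoly ℤ x).map (algebraMap ℤ ℚ) :=
    minpoly.isIntegrallyClosed_eq_field_fractions' ℚ h1
  have := minpolyZ_coeff_zero_isUnit hx h1 h2
  rw [Int.isUnit_iff] at this
  rw [heq, coeff_map]
  rcases this with h | h <;> rw [h] <;> simp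

lemma roots_prod_pm (hx : x ≠ 0) (h1 : IsIntegral ℤ x) (h2 : IsIntegral ℤ x⁻¹) :
    ((minpoly ℚ x).map (algebraMap ℚ ℂ)).roots.prod = 1 ∨
      ((minpoly ℚ x).map (algebraMap ℚ ℂ)).roots.prod = -1 := by
  have hQ : IsIntegral ℚ x := h1.tower_top
  have hmo : ((minpoly ℚ x).map (algebraMap ℚ ℂ)).Monic := (minpoly.monic hQ).map _
  have hsp : ((minpoly ℚ x).map (algebraMap ℚ ℂ)).Splits :=
    IsAlgClosed.splits _
  have hpr := hsp.coeff_zero_eq_prod_roots_of_monic hmo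
  rw [coeff_map] at hpr
  rcases minpolyQ_coeff_zero hx h1 h2 with h | h <;> rw [h] at hpr <;>
    rcases Nat.even_or_odd ((minpoly ℚ x).map (algebraMap ℚ ℂ)).natDegree with he | he <;>
    rw [he.neg_one_pow] at hpr <;> push_cast at hpr <;>
    simp only [one_mul, neg_one_mul] at hpr <;>
    first
      | (left; linear_combination hpr)
      | (left; linear_combination -hpr)
      | (right; linear_combination hpr)
      | (right; linear_combination -hpr)

lemma eq_pm_one_of_degree_one (hx : x ≠ 0) (h1 : IsIntegral ℤ x) (h2 : IsIntegral ℤ x⁻¹)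
    (hd : (minpoly ℚ x).natDegree = 1) : x = 1 ∨ x = -1 := by
  have hQ : IsIntegral ℚ x := h1.tower_top
  have heq := (minpoly.monic hQ).eq_X_add_C hd
  have hev := minpoly.aeval ℚ x
  rw [heq] at hev
  simp only [map_add, aeval_X, aeval_C] at hev
  rcases minpolyQ_coeff_zero hx h1 h2 with h | h <;> rw [h] at hev
  · right; push_cast at hev; linear_combination hev
  · left; push_cast at hev; linear_combination hev

lemma key (α β : ℂ) (hα0 : α ≠ 0) (hβ0 : β ≠ 0)
    (hαZ : IsIntegral ℤ α) (hβZ : IsIntegral ℤ β)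
    (hαiZ : IsIntegral ℤ α⁻¹) (hβiZ : IsIntegral ℤ β⁻¹)
    (hco : Nat.Coprime (degQ α) (degQ β))
    (hdvd : degQ (α * β) ∣ degQ α) :
    β ^ (degQ (α * β)) = 1 ∨ β ^ (degQ (α * β)) = -1 := by
  set γ : ℂ := α * β with hγdef
  have hγ0 : γ ≠ 0 := mul_ne_zero hα0 hβ0
  have hγZ : IsIntegral ℤ γ := hαZ.mul hβZ
  have hγiZ : IsIntegral ℤ γ⁻¹ := by rw [hγdef, mul_inv]; exact hαiZ.mul hβiZ
  have hαQ : IsIntegral ℚ α := hαZ.tower_top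
  have hβQ : IsIntegral ℚ β := hβZ.tower_top
  have hγQ : IsIntegral ℚ γ := hγZ.tower_top
  set F : IntermediateField ℚ ℂ := ℚ⟮β⟯ with hFdef
  have hγF : IsIntegral F γ := hγQ.tower_top
  set m := degQ α
  set n := degQ β
  set p := degQ γ
  set d := (minpoly F γ).natDegree with hd
  -- d ≤ p
  have hd_dvd : minpoly ↥F γ ∣ (minpoly ℚ γ).map (algebraMap ℚ ↥F) :=
    minpoly.dvd_map_of_isScalarTower ℚ ↥F γ
  have hmapne : (minpoly ℚ γ).map (algebraMap ℚ ↥F) ≠ 0 :=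
    Polynomial.map_ne_zero (minpoly.ne_zero hγQ)
  have hdp : d ≤ p := by
    have := Polynomial.natDegree_le_of_dvd hd_dvd hmapne
    rwa [natDegree_map] at this
  -- memberships
  have hβF : β ∈ F := mem_adjoin_simple_self ℚ β
  have hβE : β ∈ F⟮γ⟯ := by
    have := F⟮γ⟯.algebraMap_mem ⟨β, hβF⟩
    simpa using this
  have hγE : γ ∈ F⟮γ⟯ := mem_adjoin_simple_self ↥F γ
  have hαE : α ∈ F⟮γ⟯ := by
    have : α = γ * β⁻¹ := by field_simp; exact hγdef.symm
    rw [this]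
    exact mul_mem hγE (inv_mem hβE)
  set L : IntermediateField ℚ ℂ := F⟮γ⟯.restrictScalars ℚ with hLdef
  have hFL : F ≤ L := by
    intro x hx
    have := F⟮γ⟯.algebraMap_mem ⟨x, hx⟩
    simpa [hLdef, mem_restrictScalars] using this
  have hext : extendScalars hFL = F⟮γ⟯ := by
    apply restrictScalars_injective ℚ
    rfl
  have hrel : relfinrank F L = d := by
    rw [relfinrank_eq_finrank_of_le hFL, hext, adjoin.finrank hγF]
  have hrankL : Module.finrank ℚ L = n * d := by
    rw [← finrank_bot_mul_relfinrank hFL, hrel, hFdef, adjoin.finrank hβQ]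
    rfl
  have hmL : m ∣ n * d := by
    have hle : ℚ⟮α⟯ ≤ L := by
      rw [adjoin_simple_le_iff]
      simpa [hLdef, mem_restrictScalars] using hαE
    rw [← hrankL, ← finrank_bot_mul_relfinrank hle, adjoin.finrank hαQ]
    exact Dvd.intro _ rfl
  -- number chase
  have hmd : m ∣ d := (Nat.Coprime.dvd_of_dvd_mul_left hco hmL)
  have hdpos : 0 < d := minpoly.natDegree_pos hγF
  have hmp : m = p ∧ d = p := by
    have h1 : p ≤ m := Nat.le_of_dvd (Nat.pos_of_dvd_of_pos hmd hdpos) hdvd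
    have h2 : m ≤ d := Nat.le_of_dvd hdpos hmd
    omega
  -- minpoly equality
  have hminEq : (minpoly ℚ γ).map (algebraMap ℚ ↥F) = minpoly ↥F γ := by
    obtain ⟨c, hc⟩ := hd_dvd
    have hcne : c ≠ 0 := by
      rintro rfl; rw [mul_zero] at hc; exact hmapne hc
    have hdeg : ((minpoly ℚ γ).map (algebraMap ℚ ↥F)).natDegree = d := by
      rw [natDegree_map]; exact hmp.2.symm
    have hc0 : c.natDegree = 0 := by
      have := congrArg natDegree hc
      rw [hdeg, natDegree_mul (minpoly.ne_zero hγF) hcne] at this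
      omega
    have hcmonic : c.leadingCoeff = 1 := by
      have h1 := (minpoly.monic hγQ).map (algebraMap ℚ ↥F)
      have := congrArg leadingCoeff hc
      rw [h1.leadingCoeff, leadingCoeff_mul, (minpoly.monic hγF).leadingCoeff, one_mul] at this
      exact this.symm
    have : c = 1 := by
      have : c.Monic := hcmonic
      exact (this.natDegree_eq_zero).mp hc0
    rw [hc, this, mul_one]
  -- root transfer
  have hroot : ∀ t ∈ ((minpoly ℚ γ).map (algebraMap ℚ ℂ)).roots,
      t * β⁻¹ ∈ ((minpoly ℚ α).map (algebraMap ℚ ℂ)).roots := by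
    intro t ht
    have htF : t ∈ (minpoly ↥F γ).aroots ℂ := by
      rw [aroots_def, ← hminEq, Polynomial.map_map, ← IsScalarTower.algebraMap_eq]
      exact ht
    set σ := (algHomAdjoinIntegralEquiv ↥F (K := ℂ) hγF).symm ⟨t, htF⟩ with hσ
    have hσgen : σ (AdjoinSimple.gen ↥F γ) = t :=
      algHomAdjoinIntegralEquiv_symm_apply_gen ↥F hγF ⟨t, htF⟩
    set a : ↥(↥F)⟮γ⟯ := ⟨α, hαE⟩ with ha
    have hab : a * (algebraMap ↥F ↥(↥F)⟮γ⟯ ⟨β, hβF⟩) = AdjoinSimple.gen ↥F γ := by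
      apply Subtype.coe_injective
      show α * β = γ
      rw [hγdef]
    have hσab : σ a * β = t := by
      have hh := congrArg σ hab
      rw [map_mul, hσgen, AlgHom.commutes] at hh
      simpa using hh
    have haP : Polynomial.aeval a (minpoly ℚ α) = 0 := by
      have h5 := Polynomial.aeval_algHom_apply (((↥F)⟮γ⟯.val).restrictScalars ℚ) a (minpoly ℚ α)
      rw [show (((↥F)⟮γ⟯.val.restrictScalars ℚ) a) = α from rfl, minpoly.aeval] at h5
      exact Subtype.coe_injective h5.symm
    have hσaP : Polynomial.aeval (σ a) (minpoly ℚ α) = 0 := by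
      have h6 := Polynomial.aeval_algHom_apply (σ.restrictScalars ℚ) a (minpoly ℚ α)
      rw [haP, map_zero] at h6
      exact h6
    have hta : t * β⁻¹ = σ a := by
      rw [eq_comm, eq_mul_inv_iff_mul_eq₀ hβ0]
      exact hσab
    rw [hta, mem_roots', IsRoot, eval_map, ← aeval_def]
    exact ⟨Polynomial.map_ne_zero (minpoly.ne_zero hαQ), hσaP⟩
  -- counting
  set Pγ := (minpoly ℚ γ).map (algebraMap ℚ ℂ) with hPγ
  set Pα := (minpoly ℚ α).map (algebraMap ℚ ℂ) with hPα
  have hsepγ : Pγ.roots.Nodup := nodup_roots ((minpoly.irreducible hγQ).separable.map)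
  have hsepα : Pα.roots.Nodup := nodup_roots ((minpoly.irreducible hαQ).separable.map)
  have hcardγ : Pγ.roots.card = p :=
    (IsAlgClosed.splits Pγ).natDegree_eq_card_roots.symm.trans (natDegree_map _)
  have hcardα : Pα.roots.card = m :=
    (IsAlgClosed.splits Pα).natDegree_eq_card_roots.symm.trans (natDegree_map _)
  set Tγ := Pγ.roots.toFinset with hTγ
  set Tα := Pα.roots.toFinset with hTα
  have hinj : Function.Injective (fun x : ℂ => x * β⁻¹) :=
    fun u v huv => by
      simpa [mul_left_inj, inv_ne_zero hβ0] using
        mul_right_cancel₀ (inv_ne_zero hβ0) huv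
  have him : Tγ.image (fun x => x * β⁻¹) = Tα := by
    apply Finset.eq_of_subset_of_card_le
    · intro y hy
      simp only [hTγ, hTα, Finset.mem_image, Multiset.mem_toFinset] at hy ⊢
      obtain ⟨t, ht, rfl⟩ := hy
      exact hroot t ht
    · rw [Finset.card_image_of_injective _ hinj,
        Multiset.toFinset_card_of_nodup hsepα, Multiset.toFinset_card_of_nodup hsepγ,
        hcardα, hcardγ, hmp.1]
  have hprodTα : Tα.prod id = Pα.roots.prod := by
    rw [Finset.prod_eq_multiset_prod, Multiset.map_id, Multiset.toFinset_val,
      Multiset.dedup_eq_self.mpr hsepα]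
  have hprodTγ : Tγ.prod id = Pγ.roots.prod := by
    rw [Finset.prod_eq_multiset_prod, Multiset.map_id, Multiset.toFinset_val,
      Multiset.dedup_eq_self.mpr hsepγ]
  have hcardTγ : Tγ.card = p := by
    rw [hTγ, Multiset.toFinset_card_of_nodup hsepγ, hcardγ]
  have key_eq : Pα.roots.prod = Pγ.roots.prod * (β⁻¹) ^ p := by
    rw [← hprodTα, ← him, Finset.prod_image (fun x _ y _ h => hinj h)]
    simp only [id]
    rw [Finset.prod_mul_distrib, Finset.prod_const, hcardTγ, ← hprodTγ]
    rfl
  have hPA : Pα.roots.prod = 1 ∨ Pα.roots.prod = -1 := roots_prod_pm hα0 hαZ hαiZ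
  have hPG : Pγ.roots.prod = 1 ∨ Pγ.roots.prod = -1 := roots_prod_pm hγ0 hγZ hγiZ
  rcases hPA with hA | hA <;> rcases hPG with hG | hG <;>
      rw [hA, hG, inv_pow] at key_eq <;>
      simp only [one_mul, neg_one_mul] at key_eq <;>
    [skip; skip; skip; skip] <;>
    · have h9 : (β ^ p)⁻¹ = 1 ∨ (β ^ p)⁻¹ = -1 := by
        first
          | (left; linear_combination key_eq)
          | (left; linear_combination -key_eq)
          | (right; linear_combination key_eq)
          | (right; linear_combination -key_eq)
      rcases h9 with h9 | h9
      · left; rw [← inv_inv (β ^ p), h9, inv_one]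
      · right; rw [← inv_inv (β ^ p), h9]; norm_num

lemma aux_dvd (α β : ℂ) (hα0 : α ≠ 0) (hβ0 : β ≠ 0)
    (hαZ : IsIntegral ℤ α) (hβZ : IsIntegral ℤ β)
    (hco : Nat.Coprime (degQ α) (degQ β))
    (hp : Nat.Prime (degQ (α * β))) :
    degQ α = 1 ∨ degQ (α * β) ∣ degQ α ∨ degQ (α * β) ∣ degQ β := by
  set γ : ℂ := α * β with hγdef
  have hαQ : IsIntegral ℚ α := hαZ.tower_top
  have hβQ : IsIntegral ℚ β := hβZ.tower_top
  have hγQ : IsIntegral ℚ γ := (hαZ.mul hβZ).tower_top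
  set F : IntermediateField ℚ ℂ := ℚ⟮β⟯ with hFdef
  have hγF : IsIntegral F γ := hγQ.tower_top
  set m := degQ α
  set n := degQ β
  set p := degQ γ
  set d := (minpoly F γ).natDegree with hd
  have hd_dvd : minpoly ↥F γ ∣ (minpoly ℚ γ).map (algebraMap ℚ ↥F) :=
    minpoly.dvd_map_of_isScalarTower ℚ ↥F γ
  have hmapne : (minpoly ℚ γ).map (algebraMap ℚ ↥F) ≠ 0 :=
    Polynomial.map_ne_zero (minpoly.ne_zero hγQ)
  have hdp : d ≤ p := by
    have := Polynomial.natDegree_le_of_dvd hd_dvd hmapne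
    rwa [natDegree_map] at this
  have hβF : β ∈ F := mem_adjoin_simple_self ℚ β
  have hβE : β ∈ F⟮γ⟯ := by
    have := F⟮γ⟯.algebraMap_mem ⟨β, hβF⟩
    simpa using this
  have hγE : γ ∈ F⟮γ⟯ := mem_adjoin_simple_self ↥F γ
  have hαE : α ∈ F⟮γ⟯ := by
    have : α = γ * β⁻¹ := by field_simp; exact hγdef.symm
    rw [this]
    exact mul_mem hγE (inv_mem hβE)
  set L : IntermediateField ℚ ℂ := F⟮γ⟯.restrictScalars ℚ with hLdef
  have hFL : F ≤ L := by
    intro x hx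
    have := F⟮γ⟯.algebraMap_mem ⟨x, hx⟩
    simpa [hLdef, mem_restrictScalars] using this
  have hext : extendScalars hFL = F⟮γ⟯ := by
    apply restrictScalars_injective ℚ
    rfl
  have hrel : relfinrank F L = d := by
    rw [relfinrank_eq_finrank_of_le hFL, hext, adjoin.finrank hγF]
  have hrankL : Module.finrank ℚ L = n * d := by
    rw [← finrank_bot_mul_relfinrank hFL, hrel, hFdef, adjoin.finrank hβQ]
    rfl
  have hmL : m ∣ n * d := by
    have hle : ℚ⟮α⟯ ≤ L := by
      rw [adjoin_simple_le_iff]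
      simpa [hLdef, mem_restrictScalars] using hαE
    rw [← hrankL, ← finrank_bot_mul_relfinrank hle, adjoin.finrank hαQ]
    exact Dvd.intro _ rfl
  have hpL : p ∣ n * d := by
    have hle : ℚ⟮γ⟯ ≤ L := by
      rw [adjoin_simple_le_iff]
      simpa [hLdef, mem_restrictScalars] using hγE
    rw [← hrankL, ← finrank_bot_mul_relfinrank hle, adjoin.finrank hγQ]
    exact Dvd.intro _ rfl
  have hmd : m ∣ d := Nat.Coprime.dvd_of_dvd_mul_left hco hmL
  by_cases hm1 : m = 1
  · exact Or.inl hm1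
  rcases (Nat.Prime.dvd_mul hp).mp hpL with hpn | hpd
  · exact Or.inr (Or.inr hpn)
  · have hdpos : 0 < d := minpoly.natDegree_pos hγF
    have hdep : d = p := le_antisymm hdp (Nat.le_of_dvd hdpos hpd)
    rcases (Nat.Prime.eq_one_or_self_of_dvd hp m (hdep ▸ hmd)) with h | h
    · exact absurd h hm1
    · exact Or.inr (Or.inl (h ▸ dvd_refl m))

theorem stmt_3 (α β : ℂ) (hα : IsAlgebraicUnit α) (hβ : IsAlgebraicUnit β)
    (hco : Nat.Coprime (degQ α) (degQ β))
    (hp : Nat.Prime (degQ (α * β))) :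
    (α ^ (degQ (α * β)) = 1 ∨ α ^ (degQ (α * β)) = -1) ∨
      (β ^ (degQ (α * β)) = 1 ∨ β ^ (degQ (α * β)) = -1) := by
  have hα0 : α ≠ 0 := hα.ne_zero
  have hβ0 : β ≠ 0 := hβ.ne_zero
  have hαZ : IsIntegral ℤ α := hα.isIntegral
  have hβZ : IsIntegral ℤ β := hβ.isIntegral
  have hαiZ : IsIntegral ℤ α⁻¹ := hα.inv_isIntegral
  have hβiZ : IsIntegral ℤ β⁻¹ := hβ.inv_isIntegral
  rcases aux_dvd α β hα0 hβ0 hαZ hβZ hco hp with h1 | h2 | h3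
  · left
    rcases eq_pm_one_of_degree_one hα0 hαZ hαiZ h1 with rfl | rfl
    · left; exact one_pow _
    · rcases Nat.even_or_odd (degQ (-1 * β)) with he | he
      · left; exact he.neg_one_pow
      · right; exact he.neg_one_pow
  · right
    exact key α β hα0 hβ0 hαZ hβZ hαiZ hβiZ hco h2
  · left
    have := key β α hβ0 hα0 hβZ hαZ hβiZ hαiZ hco.symm (by rw [mul_comm β α]; exact h3)
    rwa [mul_comm β α] at this
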